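/- Let (V,Q) be a nondegenerate quadratic space in characteristic 2 with polar form β, ξ ∈ 𝔬(V)* with associated alternating form β_ξ. Then the coadjoint stabilizer Z_G(ξ) of ξ in G = SO(V) coincides with {g ∈ G : β_ξ(gv, gv') = β_ξ(v,v') for all v, v' ∈ V}. -/

import Mathlib

open QuadraticMap LinearMap Matrix

section aux
variable {k V : Type*} [Field k] [CharP k 2]
  [AddCommGroup V] [Module k V] [FiniteDimensional k V]

set_option linter.unusedSectionVars false

lemma aux_trace_sym_alt {n : Type*} [Fintype n] [DecidableEq n]
    (N S : Matrix n n k) (hN : Nᵀ = N) (hS : Sᵀ = S)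
    (hSd : ∀ i, S i i = 0) : Matrix.trace (N * S) = 0 := by
  have hN' : ∀ i j, N j i = N i j := fun i j => by
    conv_rhs => rw [← hN]
    rfl
  have hS' : ∀ i j, S j i = S i j := fun i j => by
    conv_rhs => rw [← hS]
    rfl
  have h : Matrix.trace (N * S)
      = ∑ p ∈ (Finset.univ ×ˢ (Finset.univ : Finset n)), N p.1 p.2 * S p.2 p.1 := by
    rw [Finset.sum_product]
    simp [Matrix.trace, Matrix.mul_apply, Matrix.diag]
  rw [h]
  refine Finset.sum_ninvolution (fun p => (p.2, p.1)) ?_ ?_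
    (fun p => Finset.mem_product.2 ⟨Finset.mem_univ _, Finset.mem_univ _⟩)
    (fun p => rfl)
  · intro p
    simp only
    rw [hN' p.1 p.2, hS' p.2 p.1]
    exact CharTwo.add_self_eq_zero _
  · intro p hp hcon
    apply hp
    have h1 : p.2 = p.1 := congrArg Prod.fst hcon
    rw [h1, hSd, mul_zero]

lemma aux_selfadj_trace (Q : QuadraticForm k V) (D Y : Module.End k V)
    (hD : ∀ v w, polar Q (D v) w = polar Q v (D w))
    (hY1 : ∀ v, polar Q (Y v) v = 0)
    (hY2 : ∀ v, (∀ w, polar Q v w = 0) → Y v = 0) :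
    LinearMap.trace k V (D * Y) = 0 := by
  classical
  have hYsym : ∀ u v, polar Q (Y u) v = polar Q u (Y v) := by
    intro u v
    have h0 : polar Q (Y (u + v)) (u + v) = 0 := hY1 _
    rw [map_add, polar_add_left, polar_add_right, polar_add_right, hY1, hY1] at h0
    have h1 : polar Q (Y u) v + polar Q (Y v) u = 0 := by
      rw [← h0]; ring
    have h2 : polar Q (Y u) v = polar Q (Y v) u := by
      rw [add_eq_zero_iff_eq_neg] at h1
      rw [h1, CharTwo.neg_eq]
    rw [h2, polar_comm]
  set R : Submodule k V := LinearMap.ker (polarBilin Q) with hRdef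
  have hmemR : ∀ v, v ∈ R ↔ ∀ w, polar Q v w = 0 := by
    intro v
    rw [hRdef, LinearMap.mem_ker]
    constructor
    · intro h w
      have := LinearMap.ext_iff.mp h w
      simpa using this
    · intro h
      ext w
      simpa using h w
  obtain ⟨W, hWc⟩ := Submodule.exists_isCompl R
  have hWc' : IsCompl W R := hWc.symm
  set e : (W × R) ≃ₗ[k] V := Submodule.prodEquivOfIsCompl W R hWc' with hedef
  set bW := Module.finBasis k W with hbWdef
  set bR := Module.finBasis k R with hbRdef
  set b : Module.Basis (Fin (Module.finrank k W) ⊕ Fin (Module.finrank k R)) k V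
    := (bW.prod bR).map e with hbdef
  have hbinl : ∀ i, b (Sum.inl i) = ((bW i : V)) := by
    intro i
    rw [hbdef, Module.Basis.map_apply, Module.Basis.prod_apply]
    simp [hedef, Submodule.coe_prodEquivOfIsCompl']
  have hbinr : ∀ j, b (Sum.inr j) = ((bR j : V)) := by
    intro j
    rw [hbdef, Module.Basis.map_apply, Module.Basis.prod_apply]
    simp [hedef, Submodule.coe_prodEquivOfIsCompl']
  have hbinlW : ∀ i, b (Sum.inl i) ∈ W := fun i => by rw [hbinl]; exact SetLike.coe_mem _
  have hbinrR : ∀ j, b (Sum.inr j) ∈ R := fun j => by rw [hbinr]; exact SetLike.coe_mem _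
  -- polar of anything with an element of R is zero
  have hRzero : ∀ (r : V), r ∈ R → ∀ s, polar Q s r = 0 := by
    intro r hr s
    rw [polar_comm]
    exact (hmemR r).mp hr s
  have hreprR : ∀ x : V, x ∈ R → ∀ i, b.repr x (Sum.inl i) = 0 := by
    intro x hx i
    rw [hbdef]
    simp only [Module.Basis.map_repr, LinearEquiv.trans_apply]
    rw [Module.Basis.prod_repr_inl]
    have h1 : (e.symm x).1 = 0 :=
      (Submodule.prodEquivOfIsCompl_symm_apply_fst_eq_zero W R hWc').mpr hx
    rw [h1, map_zero]
    rfl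
  -- matrices
  set MD := LinearMap.toMatrix b b D with hMDdef
  set MY := LinearMap.toMatrix b b Y with hMYdef
  set J₀ : Matrix (Fin (Module.finrank k W)) (Fin (Module.finrank k W)) k :=
    Matrix.of (fun i j => polar Q (b (Sum.inl i)) (b (Sum.inl j))) with hJdef
  set D11 : Matrix (Fin (Module.finrank k W)) (Fin (Module.finrank k W)) k :=
    Matrix.of (fun i j => MD (Sum.inl i) (Sum.inl j)) with hD11def
  set A : Matrix (Fin (Module.finrank k W)) (Fin (Module.finrank k W)) k :=
    Matrix.of (fun i j => MY (Sum.inl i) (Sum.inl j)) with hAdef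
  -- pairing expansion
  have hpair : ∀ (s t : V), polar Q s t
      = ∑ m, (b.repr t) (Sum.inl m) * polar Q s (b (Sum.inl m)) := by
    intro s t
    conv_lhs => rw [← Module.Basis.sum_repr b t]
    rw [← polarBilin_apply_apply, map_sum]
    rw [Fintype.sum_sum_type]
    have h2 : ∑ m, (polarBilin Q s) ((b.repr t) (Sum.inr m) • b (Sum.inr m)) = 0 := by
      apply Finset.sum_eq_zero
      intro m _
      rw [LinearMap.map_smul]
      rw [polarBilin_apply_apply]
      rw [hRzero _ (hbinrR m) s, smul_zero]
    rw [h2, add_zero]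
    apply Finset.sum_congr rfl
    intro m _
    rw [LinearMap.map_smul, polarBilin_apply_apply, smul_eq_mul]
  have hM0 : Matrix.of (fun i j => polar Q (b (Sum.inl i)) (D (b (Sum.inl j)))) = J₀ * D11 := by
    ext i j
    rw [Matrix.mul_apply]
    simp only [Matrix.of_apply]
    rw [hpair (b (Sum.inl i)) (D (b (Sum.inl j)))]
    apply Finset.sum_congr rfl
    intro m _
    rw [hD11def, hMDdef]
    simp only [Matrix.of_apply, LinearMap.toMatrix_apply, hJdef]
    ring
  have hS0 : Matrix.of (fun i j => polar Q (b (Sum.inl i)) (Y (b (Sum.inl j)))) = J₀ * A := by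
    ext i j
    rw [Matrix.mul_apply]
    simp only [Matrix.of_apply]
    rw [hpair (b (Sum.inl i)) (Y (b (Sum.inl j)))]
    apply Finset.sum_congr rfl
    intro m _
    rw [hAdef, hMYdef]
    simp only [Matrix.of_apply, LinearMap.toMatrix_apply, hJdef]
    ring
  -- invertibility of J₀
  have hJinj : ∀ x, J₀.mulVec x = 0 → x = 0 := by
    intro x hx
    set u : V := ∑ j, x j • b (Sum.inl j) with hudef
    have hui : ∀ i, polar Q (b (Sum.inl i)) u = 0 := by
      intro i
      have h1 : polar Q (b (Sum.inl i)) u = ∑ j, J₀ i j * x j := by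
        rw [hudef, ← polarBilin_apply_apply, map_sum]
        apply Finset.sum_congr rfl
        intro j _
        rw [LinearMap.map_smul, polarBilin_apply_apply, smul_eq_mul, hJdef]
        simp only [Matrix.of_apply]
        ring
      rw [h1]
      have := congrFun hx i
      simpa [Matrix.mulVec, dotProduct] using this
    have huR : u ∈ R := by
      rw [hmemR]
      intro w
      have hz : polarBilin Q u = 0 := by
        apply Module.Basis.ext b
        intro κ
        cases κ with
        | inl i => simp only [polarBilin_apply_apply, LinearMap.zero_apply]
                   rw [polar_comm]; exact hui i
        | inr j => simp only [polarBilin_apply_apply, LinearMap.zero_apply]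
                   exact hRzero _ (hbinrR j) u
      have := LinearMap.ext_iff.mp hz w
      simpa using this
    have huW : u ∈ W := by
      apply Submodule.sum_mem
      intro j _
      exact Submodule.smul_mem _ _ (hbinlW j)
    have hu0 : u = 0 := Submodule.disjoint_def.mp hWc.disjoint u huR huW
    have li : LinearIndependent k (fun i => b (Sum.inl i)) :=
      b.linearIndependent.comp Sum.inl Sum.inl_injective
    funext j
    refine Fintype.linearIndependent_iff.mp li x ?_ j
    show ∑ j, x j • b (Sum.inl j) = 0
    rw [← hudef]; exact hu0
  have hJu : IsUnit J₀ := by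
    rw [← Matrix.mulVec_injective_iff_isUnit]
    have hker : LinearMap.ker J₀.mulVecLin = ⊥ := by
      rw [LinearMap.ker_eq_bot']
      intro m hm
      exact hJinj m hm
    have h2 := LinearMap.ker_eq_bot.mp hker
    exact h2
  have hdet : IsUnit J₀.det := (Matrix.isUnit_iff_isUnit_det _).mp hJu
  have hKJ : J₀⁻¹ * J₀ = 1 := Matrix.nonsing_inv_mul _ hdet
  -- symmetries
  have hJsym : J₀ᵀ = J₀ := by
    ext i j; simp only [Matrix.transpose_apply, hJdef, Matrix.of_apply]; exact polar_comm _ _ _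
  have hM0sym : (Matrix.of (fun i j => polar Q (b (Sum.inl i)) (D (b (Sum.inl j)))))ᵀ
      = Matrix.of (fun i j => polar Q (b (Sum.inl i)) (D (b (Sum.inl j)))) := by
    ext i j
    simp only [Matrix.transpose_apply, Matrix.of_apply]
    rw [polar_comm, hD, polar_comm]
  have hS0sym : (Matrix.of (fun i j => polar Q (b (Sum.inl i)) (Y (b (Sum.inl j)))))ᵀ
      = Matrix.of (fun i j => polar Q (b (Sum.inl i)) (Y (b (Sum.inl j)))) := by
    ext i j
    simp only [Matrix.transpose_apply, Matrix.of_apply]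
    rw [← hYsym]; exact polar_comm _ _ _
  have hS0diag : ∀ i, (Matrix.of (fun i j => polar Q (b (Sum.inl i)) (Y (b (Sum.inl j))))) i i = 0 := by
    intro i
    simp only [Matrix.of_apply]
    rw [← hYsym]
    exact hY1 _
  -- zero blocks
  have hMYc : ∀ κ j, MY κ (Sum.inr j) = 0 := by
    intro κ j
    rw [hMYdef, LinearMap.toMatrix_apply]
    rw [hY2 _ ((hmemR _).mp (hbinrR j)), map_zero]
    rfl
  have hMDc : ∀ i j, MD (Sum.inl i) (Sum.inr j) = 0 := by
    intro i j
    rw [hMDdef, LinearMap.toMatrix_apply]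
    apply hreprR
    rw [hmemR]
    intro w
    rw [hD]
    exact (hmemR _).mp (hbinrR j) (D w)
  -- trace computation
  have htr : LinearMap.trace k V (D * Y) = Matrix.trace (MD * MY) := by
    rw [LinearMap.trace_eq_matrix_trace k b, Module.End.mul_eq_comp,
      LinearMap.toMatrix_comp b b b, ← hMDdef, ← hMYdef]
  have hsplit : Matrix.trace (MD * MY) = Matrix.trace (D11 * A) := by
    rw [Matrix.trace, Matrix.trace, Fintype.sum_sum_type]
    have h2 : ∑ j, (MD * MY).diag (Sum.inr j) = 0 := by
      apply Finset.sum_eq_zero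
      intro j _
      simp only [Matrix.diag, Matrix.mul_apply]
      apply Finset.sum_eq_zero
      intro m _
      rw [hMYc, mul_zero]
    rw [h2, add_zero]
    apply Finset.sum_congr rfl
    intro i _
    simp only [Matrix.diag, Matrix.mul_apply]
    rw [Fintype.sum_sum_type]
    have h3 : ∑ m, MD (Sum.inl i) (Sum.inr m) * MY (Sum.inr m) (Sum.inl i) = 0 := by
      apply Finset.sum_eq_zero
      intro m _
      rw [hMDc, zero_mul]
    rw [h3, add_zero]
    rfl
  have hD11 : D11 = J₀⁻¹ * Matrix.of (fun i j => polar Q (b (Sum.inl i)) (D (b (Sum.inl j)))) := by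
    rw [hM0, ← Matrix.mul_assoc, hKJ, Matrix.one_mul]
  have hA : A = J₀⁻¹ * Matrix.of (fun i j => polar Q (b (Sum.inl i)) (Y (b (Sum.inl j)))) := by
    rw [hS0, ← Matrix.mul_assoc, hKJ, Matrix.one_mul]
  rw [htr, hsplit, hD11, hA, ← Matrix.mul_assoc]
  apply aux_trace_sym_alt
  · rw [Matrix.transpose_mul, Matrix.transpose_mul, Matrix.transpose_nonsing_inv, hJsym,
      hM0sym, ← Matrix.mul_assoc]
  · exact hS0sym
  · exact hS0diag

lemma aux_trace_smulRight (f : Module.Dual k V) (x : V) :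
    LinearMap.trace k V (LinearMap.smulRight f x) = f x := by
  have h : LinearMap.smulRight f x = dualTensorHom k V V (f ⊗ₜ x) := by
    ext v
    simp [dualTensorHom_apply]
  rw [h, trace_eq_contract_apply, contractLeft_apply]

end aux

/-- For `ξ ∈ 𝔬(V)*` with associated alternating form `β_ξ`, an orthogonal
transformation `γ` fixes `ξ` under the coadjoint action iff it preserves `β_ξ`. -/
theorem stmt_13 {k V : Type*} [Field k] [CharP k 2]
    [AddCommGroup V] [Module k V] [FiniteDimensional k V]
    (Q : QuadraticForm k V)
    (hQ : ∀ v, (∀ w, QuadraticMap.polar Q v w = 0) → v ≠ 0 → Q v ≠ 0)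
    (g : Submodule k (Module.End k V))
    (hgmem : ∀ X : Module.End k V, X ∈ g ↔
      ((∀ v, QuadraticMap.polar Q (X v) v = 0) ∧
       ∀ v, (∀ w, QuadraticMap.polar Q v w = 0) → X v = 0))
    (ξ : Module.Dual k g) (X : Module.End k V)
    (hX : ∀ x : g, ξ x = LinearMap.trace k V (X * (x : Module.End k V)))
    (γ : V ≃ₗ[k] V) (hγ : ∀ v, Q (γ v) = Q v) :
    (∀ x y : g, (y : Module.End k V) =
        γ.symm.toLinearMap ∘ₗ (x : Module.End k V) ∘ₗ γ.toLinearMap → ξ y = ξ x)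
    ↔ (∀ v w : V,
        QuadraticMap.polar Q (X (γ v)) (γ w) - QuadraticMap.polar Q (γ v) (X (γ w)) =
        QuadraticMap.polar Q (X v) w - QuadraticMap.polar Q v (X w)) := by
  -- basic facts
  have hpol : ∀ a c : V, polar Q (γ a) (γ c) = polar Q a c := by
    intro a c
    unfold QuadraticMap.polar
    rw [← map_add γ, hγ, hγ, hγ]
  set G : Module.End k V := γ.toLinearMap with hGdef
  set G' : Module.End k V := γ.symm.toLinearMap with hG'def
  have hGG' : G * G' = 1 := by
    ext v; simp [hGdef, hG'def, Module.End.mul_eq_comp]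
  have hG'G : G' * G = 1 := by
    ext v; simp [hGdef, hG'def, Module.End.mul_eq_comp]
  set D : Module.End k V := G * X * G' - X with hDdef
  -- Step 1 : LHS ↔ ∀ x ∈ g, trace (D * x) = 0
  have htrD : ∀ x : Module.End k V,
      LinearMap.trace k V (D * x) =
      LinearMap.trace k V (X * (G' * x * G)) - LinearMap.trace k V (X * x) := by
    intro x
    have h1 : D * x = G * X * G' * x - X * x := by rw [hDdef, sub_mul]
    rw [h1, _root_.map_sub]
    congr 1
    have h2 : X * (G' * x * G) = (X * G' * x) * G := by noncomm_ring
    rw [h2, ← LinearMap.trace_mul_comm k G (X * G' * x)]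
    congr 1
  have hconjmem : ∀ x : Module.End k V, x ∈ g → (G' * x * G) ∈ g := by
    intro x hx
    rw [hgmem] at hx ⊢
    constructor
    · intro v
      have h1 : polar Q ((G' * x * G) v) v
          = polar Q (γ ((G' * x * G) v)) (γ v) := (hpol _ _).symm
      rw [h1]
      have h2 : γ ((G' * x * G) v) = x (γ v) := by
        simp [hGdef, hG'def, Module.End.mul_eq_comp]
      rw [h2]
      exact hx.1 (γ v)
    · intro v hv
      have hγv : ∀ w, polar Q (γ v) w = 0 := by
        intro w
        have := hpol v (γ.symm w)
        rw [γ.apply_symm_apply] at this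
        rw [this]
        exact hv _
      have h3 : x (γ v) = 0 := hx.2 (γ v) hγv
      show G' (x (G v)) = 0
      have : G v = γ v := rfl
      rw [this, h3]
      simp [hG'def]
  have step1 : (∀ x y : g, (y : Module.End k V) =
        γ.symm.toLinearMap ∘ₗ (x : Module.End k V) ∘ₗ γ.toLinearMap → ξ y = ξ x)
      ↔ (∀ x : g, LinearMap.trace k V (D * (x : Module.End k V)) = 0) := by
    constructor
    · intro hL x
      set y : g := ⟨G' * (x : Module.End k V) * G, hconjmem _ x.2⟩ with hydef
      have hy : (y : Module.End k V) =
          γ.symm.toLinearMap ∘ₗ (x : Module.End k V) ∘ₗ γ.toLinearMap := by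
        show G' * (x : Module.End k V) * G = _
        rw [mul_assoc]
        rfl
      have := hL x y hy
      rw [hX, hX] at this
      rw [htrD]
      rw [hydef] at this
      show LinearMap.trace k V (X * (G' * ↑x * G)) - LinearMap.trace k V (X * ↑x) = 0
      rw [← this]
      exact sub_self _
    · intro hR x y hy
      rw [hX, hX]
      have hyc : (y : Module.End k V) = G' * (x : Module.End k V) * G := by
        rw [hy, mul_assoc]; rfl
      rw [hyc]
      have := htrD (x : Module.End k V)
      rw [hR x] at this
      have h5 : LinearMap.trace k V (X * (G' * ↑x * G)) = LinearMap.trace k V (X * ↑x) := by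
        have := (sub_eq_zero.mp this.symm)
        exact this
      exact h5
  -- Step 2 : rephrase RHS in terms of D
  have step2 : (∀ v w : V, polar Q (D v) w = polar Q v (D w)) ↔
      (∀ v w : V,
        polar Q (X (γ v)) (γ w) - polar Q (γ v) (X (γ w)) =
        polar Q (X v) w - polar Q v (X w)) := by
    have hDv : ∀ v w : V, polar Q (D v) w - polar Q v (D w)
        = (polar Q (X (γ.symm v)) (γ.symm w) - polar Q (γ.symm v) (X (γ.symm w)))
          - (polar Q (X v) w - polar Q v (X w)) := by
      intro v w
      have e1 : D v = γ (X (γ.symm v)) - X v := rfl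
      have e2 : D w = γ (X (γ.symm w)) - X w := rfl
      rw [e1, e2, polar_sub_left, polar_sub_right]
      have e3 : polar Q (γ (X (γ.symm v))) w = polar Q (X (γ.symm v)) (γ.symm w) := by
        conv_lhs => rw [← γ.apply_symm_apply w]
        exact hpol _ _
      have e4 : polar Q v (γ (X (γ.symm w))) = polar Q (γ.symm v) (X (γ.symm w)) := by
        conv_lhs => rw [← γ.apply_symm_apply v]
        exact hpol _ _
      rw [e3, e4]
      ring
    constructor
    · intro h v w
      have h1 := hDv (γ v) (γ w)
      rw [h (γ v) (γ w), sub_self] at h1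
      rw [γ.symm_apply_apply, γ.symm_apply_apply] at h1
      exact (sub_eq_zero.mp h1.symm).symm
    · intro h v w
      have h1 := hDv v w
      have h3 := h (γ.symm v) (γ.symm w)
      rw [γ.apply_symm_apply, γ.apply_symm_apply] at h3
      rw [← h3, sub_self] at h1
      exact sub_eq_zero.mp h1
  -- Step 3 : trace condition ↔ self-adjointness of D
  have step3 : (∀ x : g, LinearMap.trace k V (D * (x : Module.End k V)) = 0)
      ↔ (∀ v w : V, polar Q (D v) w = polar Q v (D w)) := by
    constructor
    · intro h v w
      set Y : Module.End k V := LinearMap.smulRight (polarBilin Q w) v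
        + LinearMap.smulRight (polarBilin Q v) w with hYdef
      have hYapp : ∀ u, Y u = polar Q w u • v + polar Q v u • w := fun u => rfl
      have hYmem : Y ∈ g := by
        rw [hgmem]
        constructor
        · intro u
          rw [hYapp, polar_add_left, polar_smul_left, polar_smul_left,
            smul_eq_mul, smul_eq_mul, mul_comm]
          exact CharTwo.add_self_eq_zero _
        · intro u hu
          rw [hYapp]
          have h1 : polar Q w u = 0 := by rw [polar_comm]; exact hu w
          have h2 : polar Q v u = 0 := by rw [polar_comm]; exact hu v
          rw [h1, h2, zero_smul, zero_smul, add_zero]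
      have htr := h ⟨Y, hYmem⟩
      have hDY : D * Y = LinearMap.smulRight (polarBilin Q w) (D v)
          + LinearMap.smulRight (polarBilin Q v) (D w) := by
        ext u
        have h5 : (D * Y) u = D (Y u) := rfl
        rw [h5, hYapp, map_add, LinearMap.map_smul, LinearMap.map_smul]
        simp [LinearMap.smulRight_apply, polarBilin_apply_apply]
      rw [show ((⟨Y, hYmem⟩ : g) : Module.End k V) = Y from rfl, hDY, map_add,
        aux_trace_smulRight, aux_trace_smulRight,
        polarBilin_apply_apply, polarBilin_apply_apply] at htr
      have h3 := add_eq_zero_iff_eq_neg.mp htr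
      rw [CharTwo.neg_eq] at h3
      exact (polar_comm _ _ _).trans h3
    · intro h x
      exact aux_selfadj_trace Q D x h
        (fun v => ((hgmem x).mp x.2).1 v) (fun v hv => ((hgmem x).mp x.2).2 v hv)
  exact step1.trans (step3.trans step2)
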